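/- Let t₀ < t₁ be real numbers, let L : [t₀, t₁] → [0, ∞) be measurable, let γ : [t₀, t₁] → [0, ∞) be integrable, and let μ : [0, ∞) → [0, ∞) be continuous and nondecreasing with μ(0) = 0 and μ(r) > 0 for r > 0. Assume the Osgood condition ∫₀¹ dr/μ(r) = ∞, assume that s ↦ γ(s)·μ(L(s)) is integrable on [t₀, t₁], and assume that L(t) ≤ ∫_{t₀}^{t} γ(s)·μ(L(s)) ds for all t ∈ [t₀, t₁]. Then L(t) = 0 for every t ∈ [t₀, t₁]. -/

import Mathlib

open MeasureTheory

/-- Osgood's lemma: if `L ≥ 0` is measurable on `[t₀, t₁]`, `γ ≥ 0` is integrable,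
`μ` is a continuous nondecreasing modulus with `μ(0) = 0`, `μ > 0` on `(0, ∞)`, satisfying
the Osgood condition `∫₀¹ dr/μ(r) = ∞`, and
`L(t) ≤ ∫_{t₀}^t γ(s) μ(L(s)) ds` for all `t ∈ [t₀, t₁]`, then `L ≡ 0` on `[t₀, t₁]`. -/
theorem osgood_lemma (t₀ t₁ : ℝ) (ht : t₀ < t₁) (L γ μ : ℝ → ℝ)
    (hLmeas : Measurable L) (hLnn : ∀ t ∈ Set.Icc t₀ t₁, 0 ≤ L t)
    (hγnn : ∀ t ∈ Set.Icc t₀ t₁, 0 ≤ γ t) (hγint : IntegrableOn γ (Set.Icc t₀ t₁))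
    (hμcont : ContinuousOn μ (Set.Ici 0)) (hμmono : MonotoneOn μ (Set.Ici 0))
    (hμ0 : μ 0 = 0) (hμpos : ∀ r > (0 : ℝ), 0 < μ r)
    (hμnn : ∀ r ≥ (0 : ℝ), 0 ≤ μ r)
    (hOsgood : ∫⁻ r in Set.Ioc (0 : ℝ) 1, ENNReal.ofReal (1 / μ r) = ⊤)
    (hint : IntegrableOn (fun s => γ s * μ (L s)) (Set.Icc t₀ t₁))
    (hineq : ∀ t ∈ Set.Icc t₀ t₁, L t ≤ ∫ s in t₀..t, γ s * μ (L s)) :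
    ∀ t ∈ Set.Icc t₀ t₁, L t = 0 := by
  set g : ℝ → ℝ := fun s => γ s * μ (L s) with hgdef
  have hgnn : ∀ s ∈ Set.Icc t₀ t₁, 0 ≤ g s := fun s hs =>
    mul_nonneg (hγnn s hs) (hμnn _ (hLnn s hs))
  have hsubI : ∀ {x u : ℝ}, t₀ ≤ x → u ≤ t₁ → x ≤ u → Set.uIcc x u ⊆ Set.Icc t₀ t₁ := by
    intro x u hx hu hxu
    rw [Set.uIcc_of_le hxu]; exact Set.Icc_subset_Icc hx hu
  have hgii : ∀ {x u : ℝ}, t₀ ≤ x → u ≤ t₁ → x ≤ u → IntervalIntegrable g volume x u :=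
    fun hx hu hxu => (hint.mono_set (hsubI hx hu hxu)).intervalIntegrable
  have hγii : ∀ {x u : ℝ}, t₀ ≤ x → u ≤ t₁ → x ≤ u → IntervalIntegrable γ volume x u :=
    fun hx hu hxu => (hγint.mono_set (hsubI hx hu hxu)).intervalIntegrable
  set F : ℝ → ℝ := fun t => ∫ s in t₀..t, g s with hFdef
  have hF0 : F t₀ = 0 := intervalIntegral.integral_same
  have hFdiff : ∀ {x u : ℝ}, t₀ ≤ x → x ≤ u → u ≤ t₁ → F u - F x = ∫ s in x..u, g s := by
    intro x u hx hxu hu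
    exact intervalIntegral.integral_interval_sub_left (hgii le_rfl hu (hx.trans hxu))
      (hgii le_rfl (hxu.trans hu) hx)
  have hFmono : ∀ {x u : ℝ}, t₀ ≤ x → x ≤ u → u ≤ t₁ → F x ≤ F u := by
    intro x u hx hxu hu
    have h := hFdiff hx hxu hu
    have h2 : 0 ≤ ∫ s in x..u, g s :=
      intervalIntegral.integral_nonneg hxu (fun s hs => hgnn s ⟨hx.trans hs.1, hs.2.trans hu⟩)
    linarith
  have hFnn : ∀ t ∈ Set.Icc t₀ t₁, 0 ≤ F t := by
    intro t htm
    rw [← hF0]; exact hFmono le_rfl htm.1 htm.2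
  have hFcont : ContinuousOn F (Set.Icc t₀ t₁) := by
    have h := intervalIntegral.continuousOn_primitive_interval
      (a := t₀) (b := t₁) (f := g) (μ := volume) (by rw [Set.uIcc_of_le ht.le]; exact hint)
    rwa [Set.uIcc_of_le ht.le] at h
  have hγprim : ContinuousOn (fun t => ∫ s in t₀..t, γ s) (Set.Icc t₀ t₁) := by
    have h := intervalIntegral.continuousOn_primitive_interval
      (a := t₀) (b := t₁) (f := γ) (μ := volume) (by rw [Set.uIcc_of_le ht.le]; exact hγint)
    rwa [Set.uIcc_of_le ht.le] at h
  have hLF : ∀ t ∈ Set.Icc t₀ t₁, L t ≤ F t := hineq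
  -- key estimate
  have key : ∀ ε : ℝ, 0 < ε → ∀ t ∈ Set.Icc t₀ t₁,
      (∫ r in ε..(ε + F t), 1 / μ r) ≤ 2 * ∫ s in t₀..t, γ s := by
    intro ε hε
    have hμε : 0 < μ ε := hμpos ε hε
    have hμpos' : ∀ r, ε ≤ r → 0 < μ r := fun r hr =>
      hμε.trans_le (hμmono (Set.mem_Ici.2 hε.le) (Set.mem_Ici.2 (hε.le.trans hr)) hr)
    have hinvcont : ContinuousOn (fun r => 1 / μ r) (Set.Ici ε) := by
      apply ContinuousOn.div continuousOn_const
        (hμcont.mono (Set.Ici_subset_Ici.mpr hε.le))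
      exact fun r hr => (hμpos' r hr).ne'
    have hinvii : ∀ {a b : ℝ}, ε ≤ a → a ≤ b →
        IntervalIntegrable (fun r => 1 / μ r) volume a b := by
      intro a b ha hab
      apply ContinuousOn.intervalIntegrable
      apply hinvcont.mono
      rw [Set.uIcc_of_le hab]
      exact fun r hr => ha.trans hr.1
    set Φ : ℝ → ℝ := fun x => ∫ r in ε..x, 1 / μ r with hΦdef
    have hΦdiffle : ∀ {a b : ℝ}, ε ≤ a → a ≤ b → Φ b - Φ a ≤ (b - a) * (1 / μ a) := by
      intro a b ha hab
      have h1 : Φ b - Φ a = ∫ r in a..b, 1 / μ r :=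
        intervalIntegral.integral_interval_sub_left (hinvii le_rfl (ha.trans hab))
          (hinvii le_rfl ha)
      rw [h1]
      have h2 : (∫ r in a..b, 1 / μ r) ≤ ∫ _r in a..b, 1 / μ a := by
        apply intervalIntegral.integral_mono_on hab (hinvii ha hab) intervalIntegrable_const
        intro r hr
        exact one_div_le_one_div_of_le (hμpos' a ha)
          (hμmono (Set.mem_Ici.2 (hε.le.trans ha)) (Set.mem_Ici.2 (hε.le.trans (ha.trans hr.1)))
            hr.1)
      rw [intervalIntegral.integral_const, smul_eq_mul] at h2
      exact h2
    set ψ : ℝ → ℝ := fun t => Φ (ε + F t) - 2 * ∫ s in t₀..t, γ s with hψdef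
    have hεM : ε ≤ ε + F t₁ := le_add_of_nonneg_right (hFnn t₁ ⟨ht.le, le_rfl⟩)
    have hGmem : ∀ t ∈ Set.Icc t₀ t₁, ε + F t ∈ Set.Icc ε (ε + F t₁) := by
      intro t htm
      exact ⟨le_add_of_nonneg_right (hFnn t htm), by linarith [hFmono htm.1 htm.2 le_rfl]⟩
    have hΦcont : ContinuousOn Φ (Set.Icc ε (ε + F t₁)) := by
      have h := intervalIntegral.continuousOn_primitive_interval
        (a := ε) (b := ε + F t₁) (f := fun r => 1 / μ r) (μ := volume)
        (by
          rw [Set.uIcc_of_le hεM]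
          exact (hinvcont.mono (fun r hr => hr.1)).integrableOn_Icc)
      rwa [Set.uIcc_of_le hεM] at h
    have hψcont : ContinuousOn ψ (Set.Icc t₀ t₁) :=
      (hΦcont.comp (continuousOn_const.add hFcont) hGmem).sub (continuousOn_const.mul hγprim)
    have hμGcont : ContinuousOn (fun t => μ (ε + F t)) (Set.Icc t₀ t₁) := by
      apply hμcont.comp (continuousOn_const.add hFcont)
      intro t htm
      exact Set.mem_Ici.2 (le_trans hε.le (le_add_of_nonneg_right (hFnn t htm)))
    have main : Set.Icc t₀ t₁ ⊆ {t | ψ t ≤ 0} := by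
      apply IsClosed.Icc_subset_of_forall_exists_gt
      · have heq : {t | ψ t ≤ 0} ∩ Set.Icc t₀ t₁ = Set.Icc t₀ t₁ ∩ ψ ⁻¹' Set.Iic 0 := by
          ext t; simp [and_comm]
        rw [heq]
        exact hψcont.preimage_isClosed_of_isClosed isClosed_Icc isClosed_Iic
      · show ψ t₀ ≤ 0
        have : Φ (ε + F t₀) = 0 := by
          rw [hF0, add_zero]
          exact intervalIntegral.integral_same
        simp [hψdef, this, intervalIntegral.integral_same]
      · rintro x ⟨hxs, hx0, hx1⟩ y hy
        have hxmem : x ∈ Set.Icc t₀ t₁ := ⟨hx0, hx1.le⟩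
        have hμGx : 0 < μ (ε + F x) :=
          hμpos' _ (le_add_of_nonneg_right (hFnn x hxmem))
        have hcont := hμGcont x hxmem
        rw [Metric.continuousWithinAt_iff] at hcont
        obtain ⟨δ, hδ, hδ'⟩ := hcont (μ (ε + F x)) hμGx
        set u := min (min y (x + δ / 2)) t₁ with hu
        have hxu : x < u := lt_min (lt_min hy (by linarith)) hx1
        have hut : u ≤ t₁ := min_le_right _ _
        have hux : t₀ ≤ u := hx0.trans hxu.le
        have huy : u ≤ y := (min_le_left _ _).trans (min_le_left _ _)
        refine ⟨u, ?_, hxu, huy⟩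
        show ψ u ≤ 0
        have humem : u ∈ Set.Icc t₀ t₁ := ⟨hux, hut⟩
        have hdist : dist u x < δ := by
          rw [Real.dist_eq, abs_of_nonneg (by linarith [hxu.le] : (0:ℝ) ≤ u - x)]
          have : u ≤ x + δ / 2 := (min_le_left _ _).trans (min_le_right _ _)
          linarith
        have hμGu : μ (ε + F u) < 2 * μ (ε + F x) := by
          have h1 := hδ' humem hdist
          rw [Real.dist_eq] at h1
          have h2 := abs_lt.1 h1
          linarith [h2.1, h2.2]
        have hFux : F u - F x = ∫ s in x..u, g s := hFdiff hx0 hxu.le hut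
        have hIγ : (∫ s in t₀..u, γ s) - ∫ s in t₀..x, γ s = ∫ s in x..u, γ s :=
          intervalIntegral.integral_interval_sub_left (hγii le_rfl hut hux)
            (hγii le_rfl hx1.le hx0)
        have hγnn' : 0 ≤ ∫ s in x..u, γ s :=
          intervalIntegral.integral_nonneg hxu.le
            (fun s hs => hγnn s ⟨hx0.trans hs.1, hs.2.trans hut⟩)
        have hgbound : (∫ s in x..u, g s) ≤ μ (ε + F u) * ∫ s in x..u, γ s := by
          rw [← intervalIntegral.integral_const_mul]
          apply intervalIntegral.integral_mono_on hxu.le (hgii hx0 hut hxu.le)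
            ((hγii hx0 hut hxu.le).const_mul _)
          intro s hs
          have hs' : s ∈ Set.Icc t₀ t₁ := ⟨hx0.trans hs.1, hs.2.trans hut⟩
          have h1 : L s ≤ ε + F u := by
            have h2 := hLF s hs'
            have h3 := hFmono hs'.1 hs.2 hut
            linarith
          have h2 : μ (L s) ≤ μ (ε + F u) :=
            hμmono (Set.mem_Ici.2 (hLnn s hs'))
              (Set.mem_Ici.2 ((hLnn s hs').trans h1)) h1
          calc γ s * μ (L s) ≤ γ s * μ (ε + F u) :=
                mul_le_mul_of_nonneg_left h2 (hγnn s hs')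
            _ = μ (ε + F u) * γ s := mul_comm _ _
        have hGxε : ε ≤ ε + F x := le_add_of_nonneg_right (hFnn x hxmem)
        have hGG : ε + F x ≤ ε + F u := by linarith [hFmono hx0 hxu.le hut]
        have hΦd := hΦdiffle hGxε hGG
        have h3 : (ε + F u) - (ε + F x) = F u - F x := by ring
        rw [h3] at hΦd
        have h4 : F u - F x ≤ 2 * μ (ε + F x) * ∫ s in x..u, γ s := by
          rw [hFux]
          calc (∫ s in x..u, g s) ≤ μ (ε + F u) * ∫ s in x..u, γ s := hgbound
            _ ≤ 2 * μ (ε + F x) * ∫ s in x..u, γ s :=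
                mul_le_mul_of_nonneg_right hμGu.le hγnn'
        have hfinal : Φ (ε + F u) - Φ (ε + F x) ≤ 2 * ∫ s in x..u, γ s := by
          calc Φ (ε + F u) - Φ (ε + F x) ≤ (F u - F x) * (1 / μ (ε + F x)) := hΦd
            _ ≤ (2 * μ (ε + F x) * ∫ s in x..u, γ s) * (1 / μ (ε + F x)) :=
                mul_le_mul_of_nonneg_right h4 (one_div_nonneg.2 hμGx.le)
            _ = 2 * ∫ s in x..u, γ s := by field_simp
        have hψx : ψ x ≤ 0 := hxs
        have hψdiff : ψ u - ψ x =
            (Φ (ε + F u) - Φ (ε + F x)) - 2 * ∫ s in x..u, γ s := by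
          simp only [hψdef]
          linarith [hIγ]
        linarith
    intro t htm
    have h := main htm
    simp only [Set.mem_setOf_eq, hψdef] at h
    linarith
  -- F vanishes identically
  have hFzero : ∀ t ∈ Set.Icc t₀ t₁, F t = 0 := by
    by_contra hcon
    push_neg at hcon
    obtain ⟨t2, htm2, hne⟩ := hcon
    have hδ : 0 < F t2 := lt_of_le_of_ne (hFnn _ htm2) (Ne.symm hne)
    set δ := F t2 with hδdef
    set m := min δ 1 with hm
    have hm0 : 0 < m := lt_min hδ one_pos
    have hm1 : m ≤ 1 := min_le_right _ _
    have hmδ : m ≤ δ := min_le_left _ _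
    set C := 2 * ∫ s in t₀..t2, γ s with hC
    have hbound : ∀ ε : ℝ, 0 < ε → ε ≤ m →
        (∫⁻ r in Set.Ioc ε m, ENNReal.ofReal (1 / μ r)) ≤ ENNReal.ofReal C := by
      intro ε hε hεm
      have hμε : 0 < μ ε := hμpos ε hε
      have hμpos' : ∀ r, ε ≤ r → 0 < μ r := fun r hr =>
        hμε.trans_le (hμmono (Set.mem_Ici.2 hε.le) (Set.mem_Ici.2 (hε.le.trans hr)) hr)
      have hinvcont : ContinuousOn (fun r => 1 / μ r) (Set.Ici ε) := by
        apply ContinuousOn.div continuousOn_const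
          (hμcont.mono (Set.Ici_subset_Ici.mpr hε.le))
        exact fun r hr => (hμpos' r hr).ne'
      have hεδ : ε ≤ ε + δ := by linarith
      have hii : IntegrableOn (fun r => 1 / μ r) (Set.Ioc ε (ε + δ)) :=
        ((hinvcont.mono (fun r hr => hr.1)).integrableOn_Icc).mono_set Set.Ioc_subset_Icc_self
      have hsub : Set.Ioc ε m ⊆ Set.Ioc ε (ε + δ) :=
        Set.Ioc_subset_Ioc le_rfl (by linarith)
      have hnnae : 0 ≤ᵐ[volume.restrict (Set.Ioc ε (ε + δ))] fun r => 1 / μ r := by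
        filter_upwards [ae_restrict_mem measurableSet_Ioc] with r hr
        exact one_div_nonneg.2 (hμpos r (hε.trans hr.1)).le
      have hreal : (∫ r in Set.Ioc ε m, 1 / μ r) ≤ C := by
        calc (∫ r in Set.Ioc ε m, 1 / μ r)
            ≤ ∫ r in Set.Ioc ε (ε + δ), 1 / μ r :=
              setIntegral_mono_set hii hnnae (HasSubset.Subset.eventuallyLE hsub)
          _ = ∫ r in ε..(ε + δ), 1 / μ r := (intervalIntegral.integral_of_le hεδ).symm
          _ ≤ C := key ε hε t2 htm2
      have hii' : IntegrableOn (fun r => 1 / μ r) (Set.Ioc ε m) := hii.mono_set hsub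
      have hnnae' : 0 ≤ᵐ[volume.restrict (Set.Ioc ε m)] fun r => 1 / μ r := by
        filter_upwards [ae_restrict_mem measurableSet_Ioc] with r hr
        exact one_div_nonneg.2 (hμpos r (hε.trans hr.1)).le
      rw [← ofReal_integral_eq_lintegral_ofReal hii' hnnae']
      exact ENNReal.ofReal_le_ofReal hreal
    have htop : (∫⁻ r in Set.Ioc (0:ℝ) m, ENNReal.ofReal (1 / μ r)) = ⊤ := by
      have hsplit : Set.Ioc (0:ℝ) 1 = Set.Ioc 0 m ∪ Set.Ioc m 1 :=
        (Set.Ioc_union_Ioc_eq_Ioc hm0.le hm1).symm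
      have hfin : (∫⁻ r in Set.Ioc m (1:ℝ), ENNReal.ofReal (1 / μ r)) ≠ ⊤ := by
        have hle : (∫⁻ r in Set.Ioc m (1:ℝ), ENNReal.ofReal (1 / μ r))
            ≤ ∫⁻ _r in Set.Ioc m (1:ℝ), ENNReal.ofReal (1 / μ m) := by
          apply setLIntegral_mono' measurableSet_Ioc
          intro r hr
          exact ENNReal.ofReal_le_ofReal
            (one_div_le_one_div_of_le (hμpos m hm0)
              (hμmono (Set.mem_Ici.2 hm0.le) (Set.mem_Ici.2 (hm0.le.trans hr.1.le)) hr.1.le))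
        rw [setLIntegral_const] at hle
        exact ne_top_of_le_ne_top
          (ENNReal.mul_ne_top ENNReal.ofReal_ne_top (measure_Ioc_lt_top).ne) hle
      rw [hsplit, lintegral_union measurableSet_Ioc (Set.Ioc_disjoint_Ioc_of_le le_rfl)] at hOsgood
      rcases ENNReal.add_eq_top.1 hOsgood with h | h
      · exact h
      · exact absurd h hfin
    set ν := volume.withDensity (fun r => ENNReal.ofReal (1 / μ r)) with hν
    have hν_apply : ∀ s : Set ℝ, MeasurableSet s →
        ν s = ∫⁻ r in s, ENNReal.ofReal (1 / μ r) :=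
      fun s hs => withDensity_apply _ hs
    have hUnion : Set.Ioc (0:ℝ) m = ⋃ n : ℕ, Set.Ioc (m / (n + 1)) m := by
      ext r
      simp only [Set.mem_Ioc, Set.mem_iUnion]
      constructor
      · rintro ⟨hr0, hrm⟩
        obtain ⟨n, hn⟩ := exists_nat_gt (m / r)
        refine ⟨n, ?_, hrm⟩
        rw [div_lt_iff₀ (by positivity : (0:ℝ) < (n:ℝ) + 1)]
        rw [div_lt_iff₀ hr0] at hn
        nlinarith [hr0.le]
      · rintro ⟨n, hn, hrm⟩
        exact ⟨lt_of_le_of_lt (div_nonneg hm0.le (by positivity)) hn, hrm⟩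
    have hmono : Monotone (fun n : ℕ => Set.Ioc (m / (n + 1)) m) := by
      intro n k hnk
      apply Set.Ioc_subset_Ioc_left
      have h1 : (0:ℝ) < (n:ℝ) + 1 := by positivity
      have h2 : (n:ℝ) + 1 ≤ (k:ℝ) + 1 := by exact_mod_cast Nat.succ_le_succ hnk
      gcongr
    have hiu : ν (⋃ n : ℕ, Set.Ioc (m / (n + 1)) m)
        = ⨆ n : ℕ, ν (Set.Ioc (m / (n + 1)) m) :=
      (hmono.directed_le).measure_iUnion
    have hle : ∀ n : ℕ, ν (Set.Ioc (m / (n + 1)) m) ≤ ENNReal.ofReal C := by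
      intro n
      rw [hν_apply _ measurableSet_Ioc]
      apply hbound
      · exact div_pos hm0 (by positivity)
      · exact div_le_self hm0.le (by exact_mod_cast Nat.one_le_iff_ne_zero.mpr (Nat.succ_ne_zero n))
    have hcontr : ν (Set.Ioc (0:ℝ) m) ≤ ENNReal.ofReal C := by
      rw [hUnion, hiu]
      exact iSup_le hle
    rw [hν_apply _ measurableSet_Ioc, htop] at hcontr
    exact absurd hcontr (by simp)
  intro t htm
  have h1 := hineq t htm
  have h2 := hFzero t htm
  have h3 := hLnn t htm
  simp only [hFdef] at h2
  have : L t ≤ 0 := by rw [← h2]; exact h1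
  linarith
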